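/- Averaging property: if I is a conditional indicator w.r.t. H defined on an H-decomposable domain, then for all X in the domain and all H-measurable sets A, I(X·1_A)·1_{A^c} = 0 a.s., and hence I(X·1_A) = I(X·1_A)·1_A a.s. -/

import Mathlib

open MeasureTheory Filter Set
open scoped ENNReal Classical

noncomputable section

variable {Ω : Type*}

/-- `S` is the conditional essential supremum of the family `Γ` of extended-real-valued
random variables, given the sub-σ-algebra `m`: `S` is `m`-measurable, a.e. dominates every
member of `Γ`, and is minimal among `m`-measurable a.e. dominants. -/
def IsCondSup {F : MeasurableSpace Ω} (μ : Measure Ω) (m : MeasurableSpace Ω)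
    (Γ : Set (Ω → EReal)) (S : Ω → EReal) : Prop :=
  Measurable[m] S ∧ (∀ Y ∈ Γ, ∀ᵐ ω ∂μ, Y ω ≤ S ω) ∧
    ∀ T : Ω → EReal, Measurable[m] T → (∀ Y ∈ Γ, ∀ᵐ ω ∂μ, Y ω ≤ T ω) →
      ∀ᵐ ω ∂μ, S ω ≤ T ω

/-- `S` is the conditional essential infimum of the family `Γ` given `m`. -/
def IsCondInf {F : MeasurableSpace Ω} (μ : Measure Ω) (m : MeasurableSpace Ω)
    (Γ : Set (Ω → EReal)) (S : Ω → EReal) : Prop :=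
  Measurable[m] S ∧ (∀ Y ∈ Γ, ∀ᵐ ω ∂μ, S ω ≤ Y ω) ∧
    ∀ T : Ω → EReal, Measurable[m] T → (∀ Y ∈ Γ, ∀ᵐ ω ∂μ, T ω ≤ Y ω) →
      ∀ᵐ ω ∂μ, T ω ≤ S ω

/-- Averaging property: if `I` is a conditional indicator w.r.t. `H` on an
`H`-decomposable domain, then for all `X` in the domain and `A ∈ H`,
`I(X·1_A)·1_{A^c} = 0` a.e., hence `I(X·1_A) = I(X·1_A)·1_A` a.e. -/
theorem conditional_indicator_averaging
    {F : MeasurableSpace Ω} (μ : Measure Ω) (H : MeasurableSpace Ω) (hH : H ≤ F)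
    (D : Set (Ω → EReal)) (h0D : (0 : Ω → EReal) ∈ D)
    (hDstable : ∀ X ∈ D, ∀ Z : Ω → EReal, Measurable[H] Z → X + Z ∈ D)
    (hdec : ∀ A : Set Ω, MeasurableSet[H] A → ∀ X ∈ D, ∀ Y ∈ D,
      (fun ω => if ω ∈ A then X ω else Y ω) ∈ D)
    (I : (Ω → EReal) → Ω → EReal)
    (hmeasI : ∀ X ∈ D, Measurable[H] (I X))
    (hbdd : ∀ X ∈ D, ∃ einf esup : Ω → EReal,
      IsCondInf μ H {X} einf ∧ IsCondSup μ H {X} esup ∧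
        ∀ᵐ ω ∂μ, einf ω ≤ I X ω ∧ I X ω ≤ esup ω)
    (X : Ω → EReal) (hX : X ∈ D) (A : Set Ω) (hA : MeasurableSet[H] A) :
    (∀ᵐ ω ∂μ, ω ∉ A → I (A.indicator X) ω = 0) ∧
      I (A.indicator X) =ᵐ[μ] A.indicator (I (A.indicator X)) := by
  have hXA : A.indicator X ∈ D := by
    have := hdec A hA X hX 0 h0D
    convert this using 1
    funext ω; simp [Set.indicator_apply]
  obtain ⟨einf, esup, ⟨hinfm, hinfle, hinfmin⟩, ⟨hsupm, hsuple, hsupmin⟩, hI⟩ := hbdd _ hXA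
  -- esup ≤ 0 on Aᶜ a.e.
  have hTm : Measurable[H] (fun ω => if ω ∈ A then esup ω else 0) :=
    Measurable.ite hA hsupm measurable_const
  have hTdom : ∀ Y ∈ ({A.indicator X} : Set (Ω → EReal)), ∀ᵐ ω ∂μ,
      Y ω ≤ (fun ω => if ω ∈ A then esup ω else 0) ω := by
    intro Y hY
    subst hY
    filter_upwards [hsuple _ rfl] with ω hω
    by_cases h : ω ∈ A
    · simpa [Set.indicator, h] using hω
    · simp [Set.indicator, h]
  have hsupT := hsupmin _ hTm hTdom
  -- 0 ≤ einf on Aᶜ a.e.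
  have hT'm : Measurable[H] (fun ω => if ω ∈ A then einf ω else 0) :=
    Measurable.ite hA hinfm measurable_const
  have hT'dom : ∀ Y ∈ ({A.indicator X} : Set (Ω → EReal)), ∀ᵐ ω ∂μ,
      (fun ω => if ω ∈ A then einf ω else 0) ω ≤ Y ω := by
    intro Y hY
    subst hY
    filter_upwards [hinfle _ rfl] with ω hω
    by_cases h : ω ∈ A
    · simpa [Set.indicator, h] using hω
    · simp [Set.indicator, h]
  have hinfT := hinfmin _ hT'm hT'dom
  have key : ∀ᵐ ω ∂μ, ω ∉ A → I (A.indicator X) ω = 0 := by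
    filter_upwards [hsupT, hinfT, hI] with ω h1 h2 ⟨h3, h4⟩ hω
    simp only [if_neg hω] at h1 h2
    exact le_antisymm (h4.trans h1) (h2.trans h3)
  refine ⟨key, ?_⟩
  filter_upwards [key] with ω hω
  by_cases h : ω ∈ A
  · simp [Set.indicator, h]
  · simp [Set.indicator, h, hω h]
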